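/- arXiv:1707.06703 — 5 statements merged into one kernel-verified Lean document; each statement's English description precedes it below -/
import Mathlib

section
/- Let P be an orthogonal projection, T a self-adjoint involution, and U = (2P - I)T. Write P = M M* with M of full column rank and ψ = M* T M. Suppose ψ z = λ z with -1 < λ < 1, and let y = M z, λ = cos ζ, θ₊ = e^{iζ}. Then (T - θ₊ I) y is nonzero and U(T - θ₊ I) y = θ₊ (T - θ₊ I) y. -/
open Matrix Complex

theorem stmt_5 {m r : ℕ} (P T : Matrix (Fin m) (Fin m) ℂ) (M : Matrix (Fin m) (Fin r) ℂ)
    (hP : P * P = P) (hPh : Pᴴ = P)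
    (hT : T * T = 1) (hTh : Tᴴ = T)
    (hPM : P = M * Mᴴ) (hM : Function.Injective M.mulVec)
    (lam ζ : ℝ) (hlam1 : -1 < lam) (hlam2 : lam < 1) (hζ : lam = Real.cos ζ)
    (z : Fin r → ℂ) (hz : z ≠ 0)
    (hψ : (Mᴴ * T * M).mulVec z = (lam : ℂ) • z) :
    (T - Complex.exp (ζ * Complex.I) • 1).mulVec (M.mulVec z) ≠ 0 ∧
      ((2 • P - 1) * T).mulVec ((T - Complex.exp (ζ * Complex.I) • 1).mulVec (M.mulVec z)) =
        Complex.exp (ζ * Complex.I) •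
          (T - Complex.exp (ζ * Complex.I) • 1).mulVec (M.mulVec z) := by
  set θ : ℂ := Complex.exp (ζ * Complex.I) with hθ
  clear_value θ
  set y : Fin m → ℂ := M.mulVec z with hy
  -- cancellation of M on the left
  have cancel : ∀ A B : Matrix (Fin r) (Fin r) ℂ, M * A = M * B → A = B := by
    intro A B h
    have hv : ∀ x, A.mulVec x = B.mulVec x := by
      intro x
      apply hM
      rw [Matrix.mulVec_mulVec, Matrix.mulVec_mulVec, h]
    ext i j
    have := congrFun (hv (Pi.single j 1)) i
    simpa [Matrix.mulVec_single] using this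
  -- MᴴM = 1
  have hMM : Mᴴ * M = 1 := by
    have h1 : M * (Mᴴ * M * Mᴴ) = M * Mᴴ := by
      have hPP := hP
      rw [hPM] at hPP
      calc M * (Mᴴ * M * Mᴴ) = M * Mᴴ * (M * Mᴴ) := by
            simp only [Matrix.mul_assoc]
        _ = M * Mᴴ := hPP
    -- cancel M on left of  (Mᴴ*M*Mᴴ) x = Mᴴ x  : use injectivity pointwise
    have h2 : Mᴴ * M * Mᴴ = Mᴴ := by
      -- same trick but rectangular; redo cancel inline
      have hv : ∀ x, (Mᴴ * M * Mᴴ).mulVec x = Mᴴ.mulVec x := by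
        intro x
        apply hM
        rw [Matrix.mulVec_mulVec, Matrix.mulVec_mulVec, h1]
      ext i j
      have := congrFun (hv (Pi.single j 1)) i
      simpa [Matrix.mulVec_single] using this
    have h3 : M * (Mᴴ * M) = M * (1 : Matrix (Fin r) (Fin r) ℂ) := by
      have h4 := congrArg conjTranspose h2
      simp only [Matrix.conjTranspose_mul, Matrix.conjTranspose_conjTranspose] at h4
      rw [Matrix.mul_one]
      exact h4
    exact cancel _ _ h3
  -- θ² - 2λθ + 1 = 0
  have hquad : θ * θ + 1 = 2 * (lam : ℂ) * θ := by
    rw [hθ, Complex.exp_mul_I, hζ, Complex.ofReal_cos]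
    linear_combination (Complex.sin (ζ:ℂ))^2 * Complex.I_sq - Complex.sin_sq_add_cos_sq (ζ:ℂ)
  -- y ≠ 0
  have hy0 : y ≠ 0 := by
    intro h
    apply hz
    apply hM
    rw [← hy, h]
    simp [Matrix.mulVec_zero]
  -- P y = y
  have h1 : P.mulVec y = y := by
    rw [hPM, hy, Matrix.mulVec_mulVec, Matrix.mul_assoc, hMM, Matrix.mul_one]
  -- P T y = λ y
  have h2 : P.mulVec (T.mulVec y) = (lam : ℂ) • y := by
    rw [hPM, hy, Matrix.mulVec_mulVec, Matrix.mulVec_mulVec]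
    rw [show M * Mᴴ * T * M = M * (Mᴴ * T * M) by
      rw [Matrix.mul_assoc, Matrix.mul_assoc, Matrix.mul_assoc],
      ← Matrix.mulVec_mulVec, hψ, Matrix.mulVec_smul]
  -- T T y = y
  have h3 : T.mulVec (T.mulVec y) = y := by
    rw [Matrix.mulVec_mulVec, hT, Matrix.one_mulVec]
  -- the vector v
  set v : Fin m → ℂ := (T - θ • 1).mulVec y with hv
  have hvexp : v = T.mulVec y - θ • y := by
    rw [hv, Matrix.sub_mulVec, Matrix.smul_mulVec, Matrix.one_mulVec]
  constructor
  · -- v ≠ 0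
    intro h0
    have hTy : T.mulVec y = θ • y := by
      have h := hvexp.symm.trans h0
      exact sub_eq_zero.mp h
    have hly : ((lam : ℂ) - θ) • y = 0 := by
      have : (lam : ℂ) • y = θ • y := by
        rw [← h2, hTy, Matrix.mulVec_smul, h1]
      rw [sub_smul, this, sub_self]
    have hlθ : (lam : ℂ) = θ := by
      rcases smul_eq_zero.mp hly with h | h
      · exact sub_eq_zero.mp h
      · exact absurd h hy0
    have him : Real.sin ζ = 0 := by
      have := congrArg Complex.im hlθ
      simp [hθ, Complex.exp_mul_I, Complex.ofReal_sin] at this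
      rw [← Complex.sin_ofReal_re]
      simpa using this.symm
    have hc2 : Real.cos ζ ^ 2 = 1 := by
      have := Real.sin_sq_add_cos_sq ζ
      rw [him] at this; linarith [this]
    rw [hζ] at hlam1 hlam2
    nlinarith [hc2]
  · -- eigenvector equation
    show ((2 • P - 1) * T).mulVec v = θ • v
    rw [← Matrix.mulVec_mulVec]
    have hTv : T.mulVec v = y - θ • T.mulVec y := by
      rw [hvexp, Matrix.mulVec_sub, Matrix.mulVec_smul, h3]
    rw [hTv]
    have h2P : (2 • P - 1 : Matrix (Fin m) (Fin m) ℂ) = P + P - 1 := by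
      rw [two_nsmul]
    rw [h2P, Matrix.sub_mulVec, Matrix.add_mulVec, Matrix.one_mulVec]
    rw [Matrix.mulVec_sub, Matrix.mulVec_smul, h1, h2, hvexp]
    match_scalars <;> ring_nf
    linear_combination hquad
end

section
/- Let P be an orthogonal projection, Q an orthogonal projection, T = 2Q - I, and U = (2P - I)T. If x is a nonzero vector with P x = 0 and P T x = 0 and Q x ≠ x, then (I - Q)x is an eigenvector of U with eigenvalue 1. -/
open Matrix

theorem stmt_7 {m : ℕ} (P Q : Matrix (Fin m) (Fin m) ℂ)
    (hP : P * P = P) (hPh : Pᴴ = P) (hQ : Q * Q = Q) (hQh : Qᴴ = Q)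
    (x : Fin m → ℂ) (hx : x ≠ 0)
    (hPx : P.mulVec x = 0) (hPTx : P.mulVec ((2 • Q - 1).mulVec x) = 0)
    (hQx : Q.mulVec x ≠ x) :
    ((1 : Matrix (Fin m) (Fin m) ℂ) - Q).mulVec x ≠ 0 ∧
      ((2 • P - 1) * (2 • Q - 1)).mulVec (((1 : Matrix (Fin m) (Fin m) ℂ) - Q).mulVec x) =
        ((1 : Matrix (Fin m) (Fin m) ℂ) - Q).mulVec x := by
  have hy' : ((1 : Matrix (Fin m) (Fin m) ℂ) - Q).mulVec x = x - Q.mulVec x := by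
    simp [Matrix.sub_mulVec]
  have hPQx : P.mulVec (Q.mulVec x) = 0 := by
    have h := hPTx
    rw [Matrix.sub_mulVec, Matrix.one_mulVec] at h
    rw [Matrix.mulVec_sub, hPx, sub_zero] at h
    have : (2 • Q).mulVec x = 2 • Q.mulVec x := by
      simp [two_smul, Matrix.add_mulVec]
    rw [this] at h
    have h2 : P.mulVec (2 • Q.mulVec x) = 2 • P.mulVec (Q.mulVec x) := by
      simp [two_smul, Matrix.mulVec_add]
    rw [h2] at h
    have h3 : (2:ℂ) • P.mulVec (Q.mulVec x) = 0 := by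
      simpa [two_smul] using h
    rcases smul_eq_zero.mp h3 with h4 | h4
    · exact absurd h4 two_ne_zero
    · exact h4
  have hQQ : Q.mulVec (Q.mulVec x) = Q.mulVec x := by
    rw [Matrix.mulVec_mulVec, hQ]
  have hPy : P.mulVec (x - Q.mulVec x) = 0 := by
    rw [Matrix.mulVec_sub, hPx, hPQx, sub_zero]
  have h1 : (2 • Q - 1).mulVec (x - Q.mulVec x) = -(x - Q.mulVec x) := by
    rw [Matrix.sub_mulVec, Matrix.one_mulVec]
    have : (2 • Q).mulVec (x - Q.mulVec x) = 2 • Q.mulVec (x - Q.mulVec x) := by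
      simp [two_smul, Matrix.add_mulVec]
    rw [this, Matrix.mulVec_sub, hQQ]
    simp
  constructor
  · rw [hy']
    intro h
    exact hQx (sub_eq_zero.mp h).symm
  · rw [hy', ← Matrix.mulVec_mulVec, h1, Matrix.mulVec_neg, Matrix.sub_mulVec,
      Matrix.one_mulVec]
    have : (2 • P).mulVec (x - Q.mulVec x) = 2 • P.mulVec (x - Q.mulVec x) := by
      simp [two_smul, Matrix.add_mulVec]
    rw [this, hPy]
    simp
end

section
/- Let P, Q be orthogonal projections, T = 2Q - I, U = (2P - I)T. If x is a vector with P x = 0, P T x = 0, and Q x ≠ 0, then Q x is an eigenvector of U with eigenvalue -1. -/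
open Matrix

theorem stmt_8 {m : ℕ} (P Q : Matrix (Fin m) (Fin m) ℂ)
    (hP : P * P = P) (hPh : Pᴴ = P) (hQ : Q * Q = Q) (hQh : Qᴴ = Q)
    (x : Fin m → ℂ)
    (hPx : P.mulVec x = 0) (hPTx : P.mulVec ((2 • Q - 1).mulVec x) = 0)
    (hQx : Q.mulVec x ≠ 0) :
    ((2 • P - 1) * (2 • Q - 1)).mulVec (Q.mulVec x) = -(Q.mulVec x) := by
  have hT : (2 • Q - 1) * Q = Q := by
    rw [sub_mul, smul_mul_assoc, hQ, one_mul, two_smul]; abel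
  have hPQ : P.mulVec (Q.mulVec x) = 0 := by
    have h2 : (2 • Q - 1).mulVec x = Q.mulVec x + Q.mulVec x - x := by
      rw [sub_mulVec, one_mulVec, two_smul, add_mulVec]
    have h3 : P.mulVec (Q.mulVec x) + P.mulVec (Q.mulVec x) = 0 := by
      have := hPTx
      rw [h2, mulVec_sub, mulVec_add, hPx, sub_zero] at this
      exact this
    have h4 : (2:ℂ) • P.mulVec (Q.mulVec x) = 0 := by
      rw [two_smul]; exact h3
    simpa using smul_eq_zero.mp h4
  have hTQx : (2 • Q - 1).mulVec (Q.mulVec x) = Q.mulVec x := by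
    rw [mulVec_mulVec, hT]
  rw [← mulVec_mulVec, hTQx, sub_mulVec, one_mulVec, two_smul, add_mulVec,
    hPQ]
  simp
end

section
/- Let n be an odd positive integer, a + b = n with a ≠ b, and X = X(Z_{2n}, ±{a,b}) the circulant graph. For each u ∈ Z_{2n}, the vector x_u = e_u - e_{u+n} satisfies A x_u = 0, where A is the adjacency matrix of X. Moreover the vectors x_0, ..., x_{n-1} form a basis of the 0-eigenspace of A. -/
open Matrix SimpleGraph

instance twoMulNeZero {n : ℕ} [NeZero n] : NeZero (2 * n) :=
  ⟨by have := NeZero.ne n; omega⟩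

/-- The circulant graph `X(Z_{2n}, ±{a,b})`: `u ~ v` iff `v - u ∈ {a, b, -a, -b}`. -/
def circulant (n a b : ℕ) : SimpleGraph (ZMod (2 * n)) :=
  SimpleGraph.fromRel (fun u v => v - u = (a : ZMod (2 * n)) ∨ v - u = (b : ZMod (2 * n)))

instance (n a b : ℕ) : DecidableRel (circulant n a b).Adj := fun u v =>
  decidable_of_iff _ (SimpleGraph.fromRel_adj _ u v).symm

/-- The vector `e_u - e_{u+n}` on the vertices of `X(Z_{2n}, ±{a,b})`. -/
def antipodalVec (n : ℕ) (u : ZMod (2 * n)) : ZMod (2 * n) → ℝ :=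
  Pi.single u 1 - Pi.single (u + (n : ZMod (2 * n))) 1

lemma antipodal_sum_apply (n : ℕ) [NeZero n] (g : Fin n → ℝ) (v : ZMod (2 * n)) :
    (∑ i : Fin n, g i • antipodalVec n ((i : ℕ) : ZMod (2 * n))) v =
      if h : v.val < n then g ⟨v.val, h⟩
      else -g ⟨v.val - n, by have := ZMod.val_lt v; omega⟩ := by
  have hvlt := ZMod.val_lt v
  have hvv : ((v.val : ℕ) : ZMod (2 * n)) = v := ZMod.natCast_rightInverse v
  have key : ∀ i : Fin n, (((i : ℕ) : ZMod (2 * n))).val = i :=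
    fun i => ZMod.val_cast_of_lt (by omega)
  have hcond1 : ∀ i : Fin n, (v = ((i : ℕ) : ZMod (2 * n))) ↔ v.val = (i : ℕ) := by
    intro i
    constructor
    · rintro rfl; exact key i
    · intro h; rw [← hvv, h]
  have hcond2 : ∀ i : Fin n,
      (v = ((i : ℕ) : ZMod (2 * n)) + (n : ZMod (2 * n))) ↔ v.val = (i : ℕ) + n := by
    intro i
    constructor
    · rintro rfl
      rw [← Nat.cast_add]; exact ZMod.val_cast_of_lt (by omega)
    · intro h; rw [← hvv, h]; push_cast; ring
  rw [Finset.sum_apply]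
  simp only [Pi.smul_apply, antipodalVec, Pi.sub_apply, Pi.single_apply, smul_eq_mul]
  simp only [hcond1, hcond2]
  split
  · next h =>
    have h2 : ∀ i : Fin n, (if v.val = (i : ℕ) + n then (1 : ℝ) else 0) = 0 :=
      fun i => if_neg (by omega)
    simp only [h2, sub_zero, mul_ite, mul_one, mul_zero]
    rw [Finset.sum_eq_single (⟨v.val, h⟩ : Fin n)]
    · exact if_pos rfl
    · intro i _ hi
      exact if_neg (fun hc => hi (Fin.ext hc.symm))
    · intro hmem; exact absurd (Finset.mem_univ _) hmem
  · next h =>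
    have h2 : ∀ i : Fin n, (if v.val = (i : ℕ) then (1 : ℝ) else 0) = 0 :=
      fun i => if_neg (by omega)
    simp only [h2, zero_sub, mul_neg, mul_ite, mul_one, mul_zero]
    rw [Finset.sum_eq_single (⟨v.val - n, by omega⟩ : Fin n)]
    · rw [if_pos (by simp; omega)]
    · intro i _ hi
      rw [if_neg (fun hc => hi (Fin.ext (by simp at hc ⊢; omega))), neg_zero]
    · intro hmem; exact absurd (Finset.mem_univ _) hmem

theorem stmt_16 (n a b : ℕ) [NeZero n] (hodd : Odd n)
    (ha : 0 < a) (hb : 0 < b) (hab : a ≠ b) (hsum : a + b = n) :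
    (∀ u : ZMod (2 * n),
        ((circulant n a b).adjMatrix ℝ).mulVec (antipodalVec n u) = 0) ∧
      LinearIndependent ℝ (fun u : Fin n => antipodalVec n ((u : ℕ) : ZMod (2 * n))) ∧
      Submodule.span ℝ (Set.range fun u : Fin n => antipodalVec n ((u : ℕ) : ZMod (2 * n))) =
        LinearMap.ker (((circulant n a b).adjMatrix ℝ).mulVecLin) := by
  have hn := Nat.pos_of_ne_zero (NeZero.ne n)
  have haltn : a < n := by omega
  have hbltn : b < n := by omega
  have hcast0 : ∀ k : ℕ, 0 < k → k < 2 * n → ((k : ZMod (2 * n)) ≠ 0) := by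
    intro k h1 h2 h
    have := congrArg ZMod.val h
    rw [ZMod.val_cast_of_lt h2, ZMod.val_zero] at this
    omega
  have hcastinj : ∀ i j : ℕ, i < 2 * n → j < 2 * n → ((i : ZMod (2 * n)) = j) → i = j := by
    intro i j hi hj h
    have := congrArg ZMod.val h
    rwa [ZMod.val_cast_of_lt hi, ZMod.val_cast_of_lt hj] at this
  have hNN : (n : ZMod (2 * n)) + n = 0 := by
    rw [← Nat.cast_add, show n + n = 2 * n by ring, ZMod.natCast_self]
  have hAB : (a : ZMod (2 * n)) + b = n := by rw [← Nat.cast_add, hsum]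
  have han : (a : ZMod (2 * n)) + n = -b := by linear_combination hAB + hNN
  have hbn : (b : ZMod (2 * n)) + n = -a := by linear_combination hAB + hNN
  have hman : -(a : ZMod (2 * n)) + n = b := by linear_combination -hAB
  have hmbn : -(b : ZMod (2 * n)) + n = a := by linear_combination -hAB
  -- distinctness of a, b, -a, -b in ZMod (2n)
  have hd1 : (a : ZMod (2 * n)) ≠ b := fun h => hab (hcastinj a b (by omega) (by omega) h)
  have hd2 : (a : ZMod (2 * n)) ≠ -a := by
    intro h
    exact hcast0 (a + a) (by omega) (by omega)
      (by push_cast; linear_combination h)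
  have hd3 : (b : ZMod (2 * n)) ≠ -b := by
    intro h
    exact hcast0 (b + b) (by omega) (by omega)
      (by push_cast; linear_combination h)
  have hd4 : (a : ZMod (2 * n)) ≠ -b := by
    intro h
    exact hcast0 n hn (by omega) (by linear_combination -hAB + h)
  have hd5 : (b : ZMod (2 * n)) ≠ -a := by
    intro h
    exact hcast0 n hn (by omega) (by linear_combination -hAB + h)
  have hd6 : -(a : ZMod (2 * n)) ≠ -b := fun h => hd1 (neg_injective h)
  have hadj : ∀ u v : ZMod (2 * n), (circulant n a b).Adj u v ↔
      (v - u = a ∨ v - u = b ∨ v - u = -a ∨ v - u = -b) := by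
    intro u v
    simp only [_root_.circulant, fromRel_adj]
    constructor
    · rintro ⟨-, (h | h) | (h | h)⟩
      · exact Or.inl h
      · exact Or.inr (Or.inl h)
      · refine Or.inr (Or.inr (Or.inl ?_)); rw [← h]; ring
      · refine Or.inr (Or.inr (Or.inr ?_)); rw [← h]; ring
    · intro h
      have hne : u ≠ v := by
        rintro rfl
        simp only [sub_self] at h
        rcases h with h | h | h | h
        · exact hcast0 a ha (by omega) h.symm
        · exact hcast0 b hb (by omega) h.symm
        · exact hcast0 a ha (by omega) (neg_eq_zero.mp h.symm)
        · exact hcast0 b hb (by omega) (neg_eq_zero.mp h.symm)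
      refine ⟨hne, ?_⟩
      rcases h with h | h | h | h
      · exact Or.inl (Or.inl h)
      · exact Or.inl (Or.inr h)
      · refine Or.inr (Or.inl ?_); rw [show u - v = -(v - u) by ring, h, neg_neg]
      · refine Or.inr (Or.inr ?_); rw [show u - v = -(v - u) by ring, h, neg_neg]
  have hfwd : ∀ w u : ZMod (2 * n), (circulant n a b).Adj w u →
      (circulant n a b).Adj w (u + n) := by
    intro w u h
    rw [hadj] at h ⊢
    have e : u + (n : ZMod (2 * n)) - w = (u - w) + n := by ring
    rw [e]
    rcases h with h | h | h | h
    · rw [h, han]; tauto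
    · rw [h, hbn]; tauto
    · rw [h, hman]; tauto
    · rw [h, hmbn]; tauto
  have hshift : ∀ w u : ZMod (2 * n), (circulant n a b).Adj w u ↔
      (circulant n a b).Adj w (u + n) := by
    intro w u
    refine ⟨hfwd w u, fun h => ?_⟩
    have := hfwd w (u + n) h
    rwa [add_assoc, hNN, add_zero] at this
  -- Part 1
  have hpart1 : ∀ u : ZMod (2 * n),
      ((circulant n a b).adjMatrix ℝ).mulVec (antipodalVec n u) = 0 := by
    intro u
    funext w
    rw [Pi.zero_apply, adjMatrix_mulVec_apply]
    simp only [antipodalVec, Pi.sub_apply, Pi.single_apply]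
    rw [Finset.sum_sub_distrib, Finset.sum_ite_eq' _ u (fun _ => (1:ℝ)),
      Finset.sum_ite_eq' _ (u + (n : ZMod (2*n))) (fun _ => (1:ℝ))]
    simp only [SimpleGraph.mem_neighborFinset]
    simp [hshift w u]
  -- neighbor finsets
  have hNbr : ∀ w : ZMod (2 * n), (circulant n a b).neighborFinset w =
      {w + a, w + b, w - a, w - b} := by
    intro w
    ext v
    simp only [SimpleGraph.mem_neighborFinset, hadj, Finset.mem_insert, Finset.mem_singleton]
    constructor
    · rintro (h | h | h | h)
      · exact Or.inl (by linear_combination h)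
      · exact Or.inr (Or.inl (by linear_combination h))
      · exact Or.inr (Or.inr (Or.inl (by linear_combination h)))
      · exact Or.inr (Or.inr (Or.inr (by linear_combination h)))
    · rintro (h | h | h | h)
      · exact Or.inl (by linear_combination h)
      · exact Or.inr (Or.inl (by linear_combination h))
      · exact Or.inr (Or.inr (Or.inl (by linear_combination h)))
      · exact Or.inr (Or.inr (Or.inr (by linear_combination h)))
  -- kernel equation
  have hkereq : ∀ x : ZMod (2 * n) → ℝ,
      ((circulant n a b).adjMatrix ℝ).mulVecLin x = 0 →
      ∀ w : ZMod (2 * n), x (w + a) + x (w + b) + x (w - a) + x (w - b) = 0 := by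
    intro x hx w
    have hcf := congrFun hx w
    rw [mulVecLin_apply, adjMatrix_mulVec_apply, hNbr, Pi.zero_apply] at hcf
    have m1 : w + (a : ZMod (2*n)) ∉ ({w + b, w - a, w - b} : Finset (ZMod (2*n))) := by
      simp only [Finset.mem_insert, Finset.mem_singleton]
      push_neg
      refine ⟨fun h => hd1 (by linear_combination h), fun h => hd2 (by linear_combination h),
        fun h => hd4 (by linear_combination h)⟩
    have m2 : w + (b : ZMod (2*n)) ∉ ({w - a, w - b} : Finset (ZMod (2*n))) := by
      simp only [Finset.mem_insert, Finset.mem_singleton]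
      push_neg
      exact ⟨fun h => hd5 (by linear_combination h), fun h => hd3 (by linear_combination h)⟩
    have m3 : w - (a : ZMod (2*n)) ∉ ({w - b} : Finset (ZMod (2*n))) := by
      simp only [Finset.mem_singleton]
      exact fun h => hd6 (by linear_combination h)
    rw [Finset.sum_insert m1, Finset.sum_insert m2, Finset.sum_insert m3,
      Finset.sum_singleton] at hcf
    linarith
  -- antipodal antisymmetry of kernel vectors
  have hanti : ∀ x : ZMod (2 * n) → ℝ,
      ((circulant n a b).adjMatrix ℝ).mulVecLin x = 0 →
      ∀ v : ZMod (2 * n), x (v + n) = - x v := by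
    intro x hx
    set y : ZMod (2 * n) → ℝ := fun v => x v + x (v + n) with hy
    suffices hy0 : ∀ v, y v = 0 by
      intro v
      have := hy0 v
      simp only [hy] at this
      linarith
    have hstep : ∀ v, y (v + a + a) = - y v := by
      intro v
      have h1 := hkereq x hx (v + a)
      have e1 : v + (a : ZMod (2*n)) + a + n = v + a - b := by linear_combination han
      have e2 : v + (n : ZMod (2*n)) = v + a + b := by linear_combination -hAB
      simp only [hy]
      rw [e1, e2]
      rw [show v + (a : ZMod (2*n)) - a = v by ring] at h1
      linarith
    have hpow : ∀ (k : ℕ) (v : ZMod (2 * n)),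
        y (v + ((2 * a * k : ℕ) : ZMod (2 * n))) = (-1 : ℝ) ^ k * y v := by
      intro k
      induction k with
      | zero => intro v; simp
      | succ k ih =>
        intro v
        have e : ((2 * a * (k + 1) : ℕ) : ZMod (2 * n)) =
            ((2 * a * k : ℕ) : ZMod (2 * n)) + a + a := by push_cast; ring
        rw [e, show v + (((2 * a * k : ℕ) : ZMod (2 * n)) + a + a) =
          (v + a + a) + ((2 * a * k : ℕ) : ZMod (2 * n)) by ring, ih, hstep, pow_succ]
        ring
    intro v
    have h0 : ((2 * a * n : ℕ) : ZMod (2 * n)) = 0 :=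
      (ZMod.natCast_eq_zero_iff _ _).mpr ⟨a, by ring⟩
    have hfin := hpow n v
    rw [h0, add_zero, hodd.neg_one_pow] at hfin
    linarith
  refine ⟨hpart1, ?_, ?_⟩
  · -- linear independence
    rw [Fintype.linearIndependent_iff]
    intro g hg i0
    have hval : (((i0 : ℕ) : ZMod (2 * n))).val = (i0 : ℕ) :=
      ZMod.val_cast_of_lt (by omega)
    have h1 : (((i0 : ℕ) : ZMod (2 * n))).val < n := by rw [hval]; exact i0.isLt
    have hcf := congrFun hg (((i0 : ℕ) : ZMod (2 * n)))
    rw [antipodal_sum_apply, dif_pos h1, Pi.zero_apply] at hcf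
    rwa [show (⟨(((i0 : ℕ) : ZMod (2 * n))).val, h1⟩ : Fin n) = i0 from Fin.ext hval] at hcf
  · -- span = kernel
    apply le_antisymm
    · rw [Submodule.span_le]
      rintro _ ⟨i, rfl⟩
      exact LinearMap.mem_ker.mpr (by rw [mulVecLin_apply]; exact hpart1 _)
    · intro x hx
      have hx' := LinearMap.mem_ker.mp hx
      have hx0 := hanti x hx'
      have hrep : x = ∑ i : Fin n,
          x ((i : ℕ) : ZMod (2 * n)) • antipodalVec n ((i : ℕ) : ZMod (2 * n)) := by
        funext v
        rw [antipodal_sum_apply]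
        have hvv : ((v.val : ℕ) : ZMod (2 * n)) = v := ZMod.natCast_rightInverse v
        split
        · next h => rw [show (((⟨v.val, h⟩ : Fin n) : ℕ) : ZMod (2 * n)) = v from hvv]
        · next h =>
          have hlt := ZMod.val_lt v
          have e2 : (((v.val - n : ℕ)) : ZMod (2 * n)) + n = v := by
            rw [← Nat.cast_add, show v.val - n + n = v.val by omega, hvv]
          have e : (((v.val - n : ℕ)) : ZMod (2 * n)) = v - n := by linear_combination e2
          rw [show ((((⟨v.val - n, by omega⟩ : Fin n)) : ℕ) : ZMod (2 * n)) =
            v - (n : ZMod (2 * n)) from e]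
          conv_lhs => rw [show v = (v - (n : ZMod (2 * n))) + n by ring]
          rw [hx0 (v - (n : ZMod (2 * n)))]
      rw [hrep]
      exact Submodule.sum_mem _ fun i _ =>
        Submodule.smul_mem _ _ (Submodule.subset_span ⟨i, rfl⟩)
end

section
/- Let n be an odd positive integer and a, b distinct positive integers with a + b = n. Let X = X(Z_{2n}, ±{a,b}) be the 4-regular circulant graph, and let U = R(I ⊗ G) be the arc-reversal Grover walk on X, where R reverses each arc and G = (1/2)J_4 - I_4 is the Grover coin. Then U^{2n}(e_0 ⊗ 𝟙/2) = e_n ⊗ 𝟙/2, i.e., the walk admits perfect state transfer from vertex 0 to vertex n at time 2n. -/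
open Matrix Complex

open scoped Kronecker

/-- The connection set `(a, b, -a, -b)` of the circulant graph `X(Z_{2n}, ±{a,b})`,
indexed by `Fin 4`.  The arc space is `Z_{2n} × Fin 4`, where `(u, k)` is the arc
from `u` to `u + s k`, grouped by tail vertex. -/
def conn (n a b : ℕ) : Fin 4 → ZMod (2 * n) :=
  ![(a : ZMod (2 * n)), (b : ZMod (2 * n)), -(a : ZMod (2 * n)), -(b : ZMod (2 * n))]

/-- The reverse of the arc `(u, k)` is `(u + s k, k + 2)`, since `s (k + 2) = - s k`. -/
def revArc (n a b : ℕ) (p : ZMod (2 * n) × Fin 4) : ZMod (2 * n) × Fin 4 :=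
  (p.1 + conn n a b p.2, p.2 + 2)

/-- The arc-reversal permutation matrix `R`. -/
def arcReversal (n a b : ℕ) :
    Matrix (ZMod (2 * n) × Fin 4) (ZMod (2 * n) × Fin 4) ℂ :=
  Matrix.of fun p q => if q = revArc n a b p then 1 else 0

/-- The `4 × 4` Grover coin `(1/2) J₄ - I₄`. -/
noncomputable def grover4 : Matrix (Fin 4) (Fin 4) ℂ :=
  (1 / 2 : ℂ) • Matrix.of (fun _ _ => 1) - 1

/-- The transition matrix `U = R (I ⊗ G)` of the arc-reversal Grover walk. -/
noncomputable def walkU (n a b : ℕ) [NeZero n] :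
    Matrix (ZMod (2 * n) × Fin 4) (ZMod (2 * n) × Fin 4) ℂ :=
  arcReversal n a b * ((1 : Matrix (ZMod (2 * n)) (ZMod (2 * n)) ℂ) ⊗ₖ grover4)

/-- The uniform superposition `e_u ⊗ 𝟙 / 2` over the four outgoing arcs at vertex `u`. -/
noncomputable def uniformAt (n : ℕ) (u : ZMod (2 * n)) : ZMod (2 * n) × Fin 4 → ℂ :=
  fun p => if p.1 = u then 1 / 2 else 0

/-! Auxiliary development -/

/-- `c_j = j (b - a)` in `ZMod (2n)`. -/
def cC (n a b : ℕ) (j : ℕ) : ZMod (2 * n) :=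
  (j : ZMod (2 * n)) * ((b : ZMod (2 * n)) - (a : ZMod (2 * n)))

noncomputable def coreE (n a b : ℕ) (j : ℕ) (k : Fin 4) (u : ZMod (2 * n)) : ℂ :=
  (-1 : ℂ) ^ j * ((if u = 0 then 1 else 0) - (if u = (n : ZMod (2 * n)) then 1 else 0))
    + (if k = 0 ∨ k = 3 then
        (if u = cC n a b j then 1 else 0) + (if u = (n : ZMod (2 * n)) + cC n a b j then 1 else 0)
      else
        (if u = -cC n a b j then 1 else 0) + (if u = (n : ZMod (2 * n)) - cC n a b j then 1 else 0))

noncomputable def psiE (n a b : ℕ) (j : ℕ) : ZMod (2 * n) × Fin 4 → ℂ :=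
  fun p => coreE n a b j p.2 p.1 / 4

noncomputable def psiO (n a b : ℕ) (j : ℕ) : ZMod (2 * n) × Fin 4 → ℂ :=
  fun p => coreE n a b j p.2 (p.1 + conn n a b p.2) / 4

lemma walkU_mulVec_apply (n a b : ℕ) [NeZero n] (v : ZMod (2 * n) × Fin 4 → ℂ)
    (u : ZMod (2 * n)) (k : Fin 4) :
    (walkU n a b).mulVec v (u, k)
      = ∑ l : Fin 4, grover4 (k + 2) l * v (u + conn n a b k, l) := by
  rw [walkU, ← mulVec_mulVec]
  have h1 : (arcReversal n a b).mulVec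
      (((1 : Matrix (ZMod (2 * n)) (ZMod (2 * n)) ℂ) ⊗ₖ grover4).mulVec v) (u, k)
      = (((1 : Matrix (ZMod (2 * n)) (ZMod (2 * n)) ℂ) ⊗ₖ grover4).mulVec v)
          (u + conn n a b k, k + 2) := by
    simp only [arcReversal, mulVec, dotProduct, of_apply, ite_mul, one_mul, zero_mul]
    rw [Finset.sum_ite_eq' (Finset.univ) (revArc n a b (u, k))]
    simp [revArc]
  rw [h1]
  simp only [mulVec, dotProduct, Fintype.sum_prod_type, kroneckerMap_apply, one_apply, ite_mul,
    one_mul, zero_mul]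
  rw [Finset.sum_comm]
  simp [Finset.sum_ite_eq]

lemma stepA (n a b : ℕ) [NeZero n] (j : ℕ) :
    (walkU n a b).mulVec (psiE n a b j) = psiO n a b j := by
  funext p
  obtain ⟨u, k⟩ := p
  rw [walkU_mulVec_apply]
  simp only [psiE, psiO, coreE, Fin.sum_univ_four, grover4, conn]
  fin_cases k <;>
    · simp only [Matrix.cons_val_zero, Matrix.cons_val_one, Matrix.head_cons, Matrix.sub_apply,
        Matrix.smul_apply, Matrix.of_apply, Matrix.one_apply, smul_eq_mul]
      simp (config := { decide := true }) only [Fin.reduceEq, Fin.reduceAdd, if_true, if_false]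
      norm_num
      ring

lemma stepB (n a b : ℕ) [NeZero n] (hsum : a + b = n) (j : ℕ) :
    (walkU n a b).mulVec (psiO n a b j) = psiE n a b (j + 1) := by
  have hb' : (b : ZMod (2 * n)) = (n : ZMod (2 * n)) - (a : ZMod (2 * n)) := by
    have : ((a + b : ℕ) : ZMod (2 * n)) = (n : ZMod (2 * n)) := by rw [hsum]
    push_cast at this
    linear_combination this
  have h2 : (n : ZMod (2 * n)) + (n : ZMod (2 * n)) = 0 := by
    have : ((2 * n : ℕ) : ZMod (2 * n)) = 0 := by simp [ZMod.natCast_self]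
    push_cast at this
    linear_combination this
  have hC : cC n a b (j + 1) = cC n a b j + ((n : ZMod (2 * n)) - (a : ZMod (2 * n)) - (a : ZMod (2 * n))) := by
    rw [cC, cC, hb']
    push_cast
    ring
  funext p
  obtain ⟨u, k⟩ := p
  rw [walkU_mulVec_apply]
  simp only [psiO, psiE, coreE, Fin.sum_univ_four, grover4, conn, hC]
  fin_cases k <;>
      (simp (config := { decide := true }); simp only [hb']; simp only [← eq_sub_iff_add_eq];
       ring_nf)
  · have g0_5 : (-((a : ZMod (2 * n)) * 2) + (n : ZMod (2 * n)) * 2 + cC n a b j : ZMod (2 * n)) = -((a : ZMod (2 * n)) * 2) + cC n a b j := by linear_combination (1 : ZMod (2 * n)) * h2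
    have g0_6 : (-((a : ZMod (2 * n)) * 2) + (n : ZMod (2 * n)) * 2 : ZMod (2 * n)) = -((a : ZMod (2 * n)) * 2) := by linear_combination (1 : ZMod (2 * n)) * h2
    have g0_8 : (-(n : ZMod (2 * n)) : ZMod (2 * n)) = (n : ZMod (2 * n)) := by linear_combination (-1 : ZMod (2 * n)) * h2
    have g0_9 : (-(n : ZMod (2 * n)) - cC n a b j : ZMod (2 * n)) = (n : ZMod (2 * n)) - cC n a b j := by linear_combination (-1 : ZMod (2 * n)) * h2
    simp only [g0_5, g0_6, g0_8, g0_9]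
    ring
  · have g1_0 : (-(n : ZMod (2 * n)) : ZMod (2 * n)) = (n : ZMod (2 * n)) := by linear_combination (-1 : ZMod (2 * n)) * h2
    have g1_2 : (-(n : ZMod (2 * n)) + cC n a b j : ZMod (2 * n)) = (n : ZMod (2 * n)) + cC n a b j := by linear_combination (-1 : ZMod (2 * n)) * h2
    have g1_8 : ((a : ZMod (2 * n)) * 2 - (n : ZMod (2 * n)) * 2 : ZMod (2 * n)) = (a : ZMod (2 * n)) * 2 := by linear_combination (-1 : ZMod (2 * n)) * h2
    have g1_9 : ((a : ZMod (2 * n)) * 2 + (-((n : ZMod (2 * n)) * 2) - cC n a b j) : ZMod (2 * n)) = (a : ZMod (2 * n)) * 2 - cC n a b j := by linear_combination (-1 : ZMod (2 * n)) * h2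
    simp only [g1_0, g1_2, g1_8, g1_9]
    ring
  · have g2_4 : (-(n : ZMod (2 * n)) - cC n a b j + (a : ZMod (2 * n)) * 2 : ZMod (2 * n)) = (a : ZMod (2 * n)) * 2 + (n : ZMod (2 * n)) - cC n a b j := by linear_combination (-1 : ZMod (2 * n)) * h2
    have g2_5 : ((n : ZMod (2 * n)) * 2 : ZMod (2 * n)) = (0 : ZMod (2 * n)) := by linear_combination (1 : ZMod (2 * n)) * h2
    have g2_6 : ((n : ZMod (2 * n)) * 2 + cC n a b j : ZMod (2 * n)) = cC n a b j := by linear_combination (1 : ZMod (2 * n)) * h2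
    have g2_7 : ((n : ZMod (2 * n)) + (a : ZMod (2 * n)) * 2 : ZMod (2 * n)) = (a : ZMod (2 * n)) * 2 + (n : ZMod (2 * n)) := by ring
    have g2_8 : ((n : ZMod (2 * n)) - cC n a b j + (a : ZMod (2 * n)) * 2 : ZMod (2 * n)) = (a : ZMod (2 * n)) * 2 + (n : ZMod (2 * n)) - cC n a b j := by ring
    have g2_9 : (-(n : ZMod (2 * n)) + (a : ZMod (2 * n)) * 2 : ZMod (2 * n)) = (a : ZMod (2 * n)) * 2 + (n : ZMod (2 * n)) := by linear_combination (-1 : ZMod (2 * n)) * h2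
    simp only [g2_4, g2_5, g2_6, g2_7, g2_8, g2_9]
    ring
  · have g3_1 : (-((a : ZMod (2 * n)) * 2) + (n : ZMod (2 * n)) * 2 : ZMod (2 * n)) = -((a : ZMod (2 * n)) * 2) := by linear_combination (1 : ZMod (2 * n)) * h2
    have g3_3 : (-((a : ZMod (2 * n)) * 2) + (n : ZMod (2 * n)) * 2 + cC n a b j : ZMod (2 * n)) = -((a : ZMod (2 * n)) * 2) + cC n a b j := by linear_combination (1 : ZMod (2 * n)) * h2
    have g3_5 : (-((a : ZMod (2 * n)) * 2) + (n : ZMod (2 * n)) * 3 : ZMod (2 * n)) = -((a : ZMod (2 * n)) * 2) + (n : ZMod (2 * n)) := by linear_combination (1 : ZMod (2 * n)) * h2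
    have g3_6 : (-((a : ZMod (2 * n)) * 2) + (n : ZMod (2 * n)) * 3 + cC n a b j : ZMod (2 * n)) = -((a : ZMod (2 * n)) * 2) + (n : ZMod (2 * n)) + cC n a b j := by linear_combination (1 : ZMod (2 * n)) * h2
    have g3_7 : ((n : ZMod (2 * n)) * 2 : ZMod (2 * n)) = (0 : ZMod (2 * n)) := by linear_combination (1 : ZMod (2 * n)) * h2
    have g3_8 : ((n : ZMod (2 * n)) * 2 - cC n a b j : ZMod (2 * n)) = -cC n a b j := by linear_combination (1 : ZMod (2 * n)) * h2
    simp only [g3_1, g3_3, g3_5, g3_6, g3_7, g3_8]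
    ring

lemma psiE_zero (n a b : ℕ) [NeZero n] : psiE n a b 0 = uniformAt n 0 := by
  funext p
  obtain ⟨u, k⟩ := p
  simp only [psiE, coreE, uniformAt, cC, Nat.cast_zero, zero_mul, pow_zero, one_mul,
    add_zero, sub_zero, neg_zero]
  split_ifs <;> norm_num

lemma psiE_final (n a b : ℕ) [NeZero n] (hodd : Odd n) (hsum : a + b = n) :
    psiE n a b n = uniformAt n ((n : ZMod (2 * n))) := by
  have h2 : (n : ZMod (2 * n)) + (n : ZMod (2 * n)) = 0 := by
    have : ((2 * n : ℕ) : ZMod (2 * n)) = 0 := by simp [ZMod.natCast_self]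
    push_cast at this
    linear_combination this
  have hb' : (b : ZMod (2 * n)) = (n : ZMod (2 * n)) - (a : ZMod (2 * n)) := by
    have : ((a + b : ℕ) : ZMod (2 * n)) = (n : ZMod (2 * n)) := by rw [hsum]
    push_cast at this
    linear_combination this
  have hcn : cC n a b n = (n : ZMod (2 * n)) := by
    rw [cC, hb']
    have hnn : (n : ZMod (2 * n)) * (n : ZMod (2 * n)) = (n : ZMod (2 * n)) := by
      obtain ⟨t, ht⟩ := hodd
      have : ((n * n : ℕ) : ZMod (2 * n)) = ((2 * n * t + n : ℕ) : ZMod (2 * n)) := by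
        congr 1
        rw [ht]; ring
      push_cast [ZMod.natCast_self] at this
      push_cast
      linear_combination this + (t : ZMod (2 * n)) * h2
    have hna : (n : ZMod (2 * n)) * ((a : ZMod (2 * n)) + (a : ZMod (2 * n))) = 0 := by
      have : ((2 * n * a : ℕ) : ZMod (2 * n)) = 0 := by
        rw [Nat.cast_mul, ZMod.natCast_self, zero_mul]
      push_cast at this
      linear_combination this
    linear_combination hnn - hna
  have hneg : -(n : ZMod (2 * n)) = (n : ZMod (2 * n)) := by linear_combination -h2
  funext p
  obtain ⟨u, k⟩ := p
  simp only [psiE, coreE, uniformAt, hcn, h2, hneg, sub_self, Odd.neg_one_pow hodd]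
  split_ifs <;> norm_num

lemma iterate (n a b : ℕ) [NeZero n] (hsum : a + b = n) :
    ∀ j : ℕ, (walkU n a b ^ (2 * j)).mulVec (psiE n a b 0) = psiE n a b j := by
  intro j
  induction j with
  | zero => simp [Matrix.one_mulVec]
  | succ j ih =>
    have h : 2 * (j + 1) = (2 * j + 1) + 1 := by ring
    rw [h, pow_succ', pow_succ', ← Matrix.mulVec_mulVec, ← Matrix.mulVec_mulVec, ih,
      stepA, stepB n a b hsum]


/-- Perfect state transfer in the Grover walk on `X(Z_{2n}, ±{a,b})` from vertex `0`
to the antipodal vertex `n` at time `2n`. -/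
theorem stmt_19 (n a b : ℕ) [NeZero n] (hodd : Odd n)
    (ha : 0 < a) (hb : 0 < b) (hab : a ≠ b) (hsum : a + b = n) :
    (walkU n a b ^ (2 * n)).mulVec (uniformAt n 0) =
      uniformAt n ((n : ZMod (2 * n))) := by
  rw [← psiE_zero n a b, iterate n a b hsum n, psiE_final n a b hodd hsum]
end
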